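/- Let T > 0 and let u, v : [0,T] × ℝ → ℝ be twice continuously differentiable with u(t,x) > 0 and v(t,x) > 0 everywhere, satisfying ∂_t u = ∂_x(u ∂_x(u+v)) and ∂_t v = ∂_x(v ∂_x(u+v)) on (0,T) × ℝ. Assume the decay condition: there exists R > 0 such that u(t,x) = v(t,x) for all t ∈ [0,T] and all |x| ≥ R, and that u(t,·) log(u(t,·)/v(t,·)) is integrable for each t. Then the relative entropy t ↦ H(u(t)||v(t)) = ∫_ℝ u(t,x) log( u(t,x)/v(t,x) ) dx is constant on [0,T]; in particular H(u(t)||v(t)) = H(u(0)||v(0)) for all t ∈ [0,T]. -/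

import Mathlib

open Real Set MeasureTheory

/-- Partial derivative in the first (time) variable. -/
noncomputable def pt (f : ℝ → ℝ → ℝ) (t x : ℝ) : ℝ := deriv (fun s => f s x) t

/-- Partial derivative in the second (space) variable. -/
noncomputable def px (f : ℝ → ℝ → ℝ) (t x : ℝ) : ℝ := deriv (fun y => f t y) x

section auxEntropy
open Function

lemma aux_slice_x {T : ℝ} {f : ℝ → ℝ → ℝ}
    (hf : ContDiffOn ℝ 2 (Function.uncurry f) (Icc 0 T ×ˢ univ))
    {t : ℝ} (ht : t ∈ Icc (0:ℝ) T) : ContDiff ℝ 2 (fun y => f t y) := by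
  rw [← contDiffOn_univ]
  exact hf.comp ((contDiff_const.prodMk contDiff_id).contDiffOn)
    (fun y _ => mk_mem_prod ht (mem_univ y))

lemma aux_slice_t {T : ℝ} {f : ℝ → ℝ → ℝ}
    (hf : ContDiffOn ℝ 2 (Function.uncurry f) (Icc 0 T ×ˢ univ))
    (x : ℝ) : ContDiffOn ℝ 2 (fun s => f s x) (Icc 0 T) := by
  exact hf.comp ((contDiff_id.prodMk contDiff_const).contDiffOn)
    (fun s hs => mk_mem_prod hs (mem_univ x))

lemma aux_hasDerivAt_pt {T : ℝ} {f : ℝ → ℝ → ℝ}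
    (hf : ContDiffOn ℝ 2 (Function.uncurry f) (Icc 0 T ×ˢ univ))
    {t : ℝ} (ht : t ∈ Ioo (0:ℝ) T) (x : ℝ) :
    HasDerivAt (fun s => f s x) (pt f t x) t := by
  have h := ((aux_slice_t hf x).differentiableOn two_ne_zero).differentiableAt
    (Icc_mem_nhds ht.1 ht.2)
  exact h.hasDerivAt

lemma aux_cont_pt {T : ℝ} {f : ℝ → ℝ → ℝ}
    (hf : ContDiffOn ℝ 2 (Function.uncurry f) (Icc 0 T ×ˢ univ)) :
    ContinuousOn (fun q : ℝ × ℝ => pt f q.1 q.2) (Ioo 0 T ×ˢ univ) := by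
  set Ω : Set (ℝ × ℝ) := Ioo 0 T ×ˢ univ with hΩdef
  have hΩ : IsOpen Ω := isOpen_Ioo.prod isOpen_univ
  have hfΩ : ContDiffOn ℝ 2 (uncurry f) Ω :=
    hf.mono (prod_mono Ioo_subset_Icc_self subset_rfl)
  have hfd : ContinuousOn (fderiv ℝ (uncurry f)) Ω :=
    hfΩ.continuousOn_fderiv_of_isOpen hΩ one_le_two
  have key : ∀ q ∈ Ω, pt f q.1 q.2 = fderiv ℝ (uncurry f) q ((1:ℝ), (0:ℝ)) := by
    rintro ⟨t, x⟩ hq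
    have hd : DifferentiableAt ℝ (uncurry f) (t, x) :=
      (hfΩ.differentiableOn two_ne_zero).differentiableAt (hΩ.mem_nhds hq)
    have hline : HasDerivAt (fun s => ((s, x) : ℝ × ℝ)) ((1:ℝ), (0:ℝ)) t :=
      (hasDerivAt_id t).prodMk (hasDerivAt_const t x)
    exact (hd.hasFDerivAt.comp_hasDerivAt t hline).deriv
  exact ContinuousOn.congr
    (((ContinuousLinearMap.apply ℝ ℝ (((1:ℝ), (0:ℝ)) : ℝ × ℝ)).continuous).comp_continuousOn hfd)
    (fun q hq => key q hq)

lemma aux_hasDerivAt_F {T : ℝ} {u v : ℝ → ℝ → ℝ}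
    (husmooth : ContDiffOn ℝ 2 (Function.uncurry u) (Icc 0 T ×ˢ univ))
    (hvsmooth : ContDiffOn ℝ 2 (Function.uncurry v) (Icc 0 T ×ˢ univ))
    (hupos : ∀ t x : ℝ, 0 < u t x) (hvpos : ∀ t x : ℝ, 0 < v t x)
    {t : ℝ} (ht : t ∈ Ioo (0:ℝ) T) (x : ℝ) :
    HasDerivAt (fun s => u s x * (Real.log (u s x) - Real.log (v s x)))
      (pt u t x * (Real.log (u t x) - Real.log (v t x) + 1)
        - (u t x / v t x) * pt v t x) t := by
  have hU := aux_hasDerivAt_pt husmooth ht x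
  have hV := aux_hasDerivAt_pt hvsmooth ht x
  have hlogU := hU.log (hupos t x).ne'
  have hlogV := hV.log (hvpos t x).ne'
  have h := hU.mul (hlogU.sub hlogV)
  refine h.congr_deriv ?_
  have h1 : u t x ≠ 0 := (hupos t x).ne'
  have h2 : v t x ≠ 0 := (hvpos t x).ne'
  show pt u t x * (Real.log (u t x) - Real.log (v t x))
    + u t x * (pt u t x / u t x - pt v t x / v t x) = _
  field_simp
  ring

lemma aux_P_contdiff {T : ℝ} {u v : ℝ → ℝ → ℝ}
    (husmooth : ContDiffOn ℝ 2 (Function.uncurry u) (Icc 0 T ×ˢ univ))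
    (hvsmooth : ContDiffOn ℝ 2 (Function.uncurry v) (Icc 0 T ×ˢ univ))
    {t : ℝ} (ht : t ∈ Icc (0:ℝ) T) :
    ContDiff ℝ 1 (deriv (fun z => u t z + v t z)) := by
  have hS : ContDiff ℝ 2 (fun z => u t z + v t z) :=
    (aux_slice_x husmooth ht).add (aux_slice_x hvsmooth ht)
  have h2 : ((2 : ℕ) : WithTop ℕ∞) = (1 : ℕ∞) + 1 := by norm_num
  rw [show ((2 : WithTop ℕ∞)) = (1 : WithTop ℕ∞) + 1 by norm_num] at hS
  exact (contDiff_succ_iff_deriv.mp hS).2.2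

lemma aux_G_contdiff {T : ℝ} {u v : ℝ → ℝ → ℝ}
    (husmooth : ContDiffOn ℝ 2 (Function.uncurry u) (Icc 0 T ×ˢ univ))
    (hvsmooth : ContDiffOn ℝ 2 (Function.uncurry v) (Icc 0 T ×ˢ univ))
    (hupos : ∀ t x : ℝ, 0 < u t x) (hvpos : ∀ t x : ℝ, 0 < v t x)
    {t : ℝ} (ht : t ∈ Icc (0:ℝ) T) :
    ContDiff ℝ 1 (fun y => u t y * deriv (fun z => u t z + v t z) y
      * (Real.log (u t y) - Real.log (v t y))) := by
  have hU : ContDiff ℝ 1 (fun y => u t y) := (aux_slice_x husmooth ht).of_le one_le_two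
  have hV : ContDiff ℝ 1 (fun y => v t y) := (aux_slice_x hvsmooth ht).of_le one_le_two
  have hP := aux_P_contdiff husmooth hvsmooth ht
  exact (hU.mul hP).mul ((hU.log (fun y => (hupos t y).ne')).sub
    (hV.log (fun y => (hvpos t y).ne')))

lemma aux_Phi_eq_derivG {T : ℝ} {u v : ℝ → ℝ → ℝ}
    (husmooth : ContDiffOn ℝ 2 (Function.uncurry u) (Icc 0 T ×ˢ univ))
    (hvsmooth : ContDiffOn ℝ 2 (Function.uncurry v) (Icc 0 T ×ˢ univ))
    (hupos : ∀ t x : ℝ, 0 < u t x) (hvpos : ∀ t x : ℝ, 0 < v t x)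
    (hu : ∀ t ∈ Ioo (0:ℝ) T, ∀ x : ℝ,
      pt u t x = px (fun s y => u s y * px (fun a b => u a b + v a b) s y) t x)
    (hv : ∀ t ∈ Ioo (0:ℝ) T, ∀ x : ℝ,
      pt v t x = px (fun s y => v s y * px (fun a b => u a b + v a b) s y) t x)
    {t : ℝ} (ht : t ∈ Ioo (0:ℝ) T) (x : ℝ) :
    pt u t x * (Real.log (u t x) - Real.log (v t x) + 1)
      - (u t x / v t x) * pt v t x
    = deriv (fun y => u t y * deriv (fun z => u t z + v t z) y
        * (Real.log (u t y) - Real.log (v t y))) x := by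
  have htI : t ∈ Icc (0:ℝ) T := Ioo_subset_Icc_self ht
  set U : ℝ → ℝ := fun y => u t y with hUdef
  set V : ℝ → ℝ := fun y => v t y with hVdef
  set P : ℝ → ℝ := deriv (fun z => u t z + v t z) with hPdef
  have hUc : ContDiff ℝ 2 U := aux_slice_x husmooth htI
  have hVc : ContDiff ℝ 2 V := aux_slice_x hvsmooth htI
  have hPc : ContDiff ℝ 1 P := aux_P_contdiff husmooth hvsmooth htI
  have hU' : HasDerivAt U (deriv U x) x :=
    ((hUc.differentiable two_ne_zero) x).hasDerivAt
  have hV' : HasDerivAt V (deriv V x) x :=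
    ((hVc.differentiable two_ne_zero) x).hasDerivAt
  have hP' : HasDerivAt P (deriv P x) x :=
    ((hPc.differentiable one_ne_zero) x).hasDerivAt
  have hUne : U x ≠ 0 := (hupos t x).ne'
  have hVne : V x ≠ 0 := (hvpos t x).ne'
  -- the PDE in terms of slices
  have hpu : pt u t x = deriv U x * P x + U x * deriv P x := by
    rw [hu t ht x]
    simp only [px]
    exact (hU'.mul hP').deriv
  have hpv : pt v t x = deriv V x * P x + V x * deriv P x := by
    rw [hv t ht x]
    simp only [px]
    exact (hV'.mul hP').deriv
  -- derivative of G in space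
  have hG : deriv (fun y => U y * P y * (Real.log (U y) - Real.log (V y))) x
      = (deriv U x * P x + U x * deriv P x) * (Real.log (U x) - Real.log (V x))
        + U x * P x * (deriv U x / U x - deriv V x / V x) :=
    (((hU'.mul hP')).mul ((hU'.log hUne).sub (hV'.log hVne))).deriv
  rw [hpu, hpv, hG]
  simp only [hUdef, hVdef] at hUne hVne ⊢
  field_simp
  ring

lemma aux_Phi_zero_far {T : ℝ} {u v : ℝ → ℝ → ℝ}
    (husmooth : ContDiffOn ℝ 2 (Function.uncurry u) (Icc 0 T ×ˢ univ))
    (hvsmooth : ContDiffOn ℝ 2 (Function.uncurry v) (Icc 0 T ×ˢ univ))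
    (hupos : ∀ t x : ℝ, 0 < u t x) (hvpos : ∀ t x : ℝ, 0 < v t x)
    {R : ℝ} (hdecay : ∀ t ∈ Icc (0:ℝ) T, ∀ x : ℝ, R ≤ |x| → u t x = v t x)
    {t : ℝ} (ht : t ∈ Ioo (0:ℝ) T) {x : ℝ} (hx : R ≤ |x|) :
    pt u t x * (Real.log (u t x) - Real.log (v t x) + 1)
      - (u t x / v t x) * pt v t x = 0 := by
  have hF := aux_hasDerivAt_F husmooth hvsmooth hupos hvpos ht x
  have hev : (fun s => u s x * (Real.log (u s x) - Real.log (v s x)))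
      =ᶠ[nhds t] (fun _ => (0:ℝ)) := by
    filter_upwards [Icc_mem_nhds ht.1 ht.2] with s hs
    rw [hdecay s hs x hx]
    ring
  have h0 : HasDerivAt (fun _ : ℝ => (0:ℝ))
      (pt u t x * (Real.log (u t x) - Real.log (v t x) + 1)
        - (u t x / v t x) * pt v t x) t := hF.congr_of_eventuallyEq hev.symm
  have := h0.deriv
  rw [deriv_const] at this
  exact this.symm

lemma aux_integral_Phi_zero {T : ℝ} {u v : ℝ → ℝ → ℝ}
    (husmooth : ContDiffOn ℝ 2 (Function.uncurry u) (Icc 0 T ×ˢ univ))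
    (hvsmooth : ContDiffOn ℝ 2 (Function.uncurry v) (Icc 0 T ×ˢ univ))
    (hupos : ∀ t x : ℝ, 0 < u t x) (hvpos : ∀ t x : ℝ, 0 < v t x)
    (hu : ∀ t ∈ Ioo (0:ℝ) T, ∀ x : ℝ,
      pt u t x = px (fun s y => u s y * px (fun a b => u a b + v a b) s y) t x)
    (hv : ∀ t ∈ Ioo (0:ℝ) T, ∀ x : ℝ,
      pt v t x = px (fun s y => v s y * px (fun a b => u a b + v a b) s y) t x)
    {R : ℝ} (hR : 0 < R)
    (hdecay : ∀ t ∈ Icc (0:ℝ) T, ∀ x : ℝ, R ≤ |x| → u t x = v t x)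
    {t : ℝ} (ht : t ∈ Ioo (0:ℝ) T) :
    ∫ x : ℝ, (pt u t x * (Real.log (u t x) - Real.log (v t x) + 1)
      - (u t x / v t x) * pt v t x) = 0 := by
  have htI : t ∈ Icc (0:ℝ) T := Ioo_subset_Icc_self ht
  set g : ℝ → ℝ := fun y => u t y * deriv (fun z => u t z + v t z) y
      * (Real.log (u t y) - Real.log (v t y)) with hgdef
  have hgc : ContDiff ℝ 1 g := aux_G_contdiff husmooth hvsmooth hupos hvpos htI
  -- reduce to a set integral over Ioc (-(R+1)) (R+1)
  have hzero : ∀ x : ℝ, x ∉ Ioc (-(R+1)) (R+1) →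
      (pt u t x * (Real.log (u t x) - Real.log (v t x) + 1)
        - (u t x / v t x) * pt v t x) = 0 := by
    intro x hx
    apply aux_Phi_zero_far husmooth hvsmooth hupos hvpos hdecay ht
    rcases not_and_or.mp hx with h | h
    · push_neg at h
      have : R + 1 ≤ |x| := by
        rw [abs_of_nonpos (by linarith)]
        linarith
      linarith
    · push_neg at h
      have : R + 1 ≤ |x| := le_trans h.le (le_abs_self x)
      linarith
  rw [← setIntegral_eq_integral_of_forall_compl_eq_zero hzero]
  have hle : -(R+1) ≤ R+1 := by linarith
  rw [← intervalIntegral.integral_of_le hle]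
  have hcongr : ∀ x : ℝ,
      (pt u t x * (Real.log (u t x) - Real.log (v t x) + 1)
        - (u t x / v t x) * pt v t x) = deriv g x := fun x =>
    aux_Phi_eq_derivG husmooth hvsmooth hupos hvpos hu hv ht x
  rw [intervalIntegral.integral_congr (fun x _ => hcongr x)]
  have hftc : ∫ y in (-(R+1))..(R+1), deriv g y = g (R+1) - g (-(R+1)) := by
    apply intervalIntegral.integral_deriv_eq_sub
    · exact fun y _ => hgc.differentiable one_ne_zero y
    · exact ((contDiff_one_iff_deriv.mp hgc).2).intervalIntegrable _ _
  have hgR : ∀ x : ℝ, R ≤ |x| → g x = 0 := by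
    intro x hx
    have := hdecay t htI x hx
    simp only [hgdef, this]
    ring
  rw [hftc, hgR (R+1) (by rw [abs_of_pos (by linarith)]; linarith),
    hgR (-(R+1)) (by rw [abs_of_nonpos (by linarith)]; linarith)]
  ring

lemma aux_cont_Phi {T : ℝ} {u v : ℝ → ℝ → ℝ}
    (husmooth : ContDiffOn ℝ 2 (Function.uncurry u) (Icc 0 T ×ˢ univ))
    (hvsmooth : ContDiffOn ℝ 2 (Function.uncurry v) (Icc 0 T ×ˢ univ))
    (hupos : ∀ t x : ℝ, 0 < u t x) (hvpos : ∀ t x : ℝ, 0 < v t x) :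
    ContinuousOn (fun q : ℝ × ℝ =>
      pt u q.1 q.2 * (Real.log (u q.1 q.2) - Real.log (v q.1 q.2) + 1)
        - (u q.1 q.2 / v q.1 q.2) * pt v q.1 q.2) (Ioo 0 T ×ˢ univ) := by
  have hsub : (Ioo 0 T ×ˢ (univ : Set ℝ)) ⊆ Icc 0 T ×ˢ univ :=
    prod_mono Ioo_subset_Icc_self subset_rfl
  have hCu : ContinuousOn (fun q : ℝ × ℝ => u q.1 q.2) (Ioo 0 T ×ˢ univ) :=
    husmooth.continuousOn.mono hsub
  have hCv : ContinuousOn (fun q : ℝ × ℝ => v q.1 q.2) (Ioo 0 T ×ˢ univ) :=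
    hvsmooth.continuousOn.mono hsub
  have h1 : ∀ q ∈ (Ioo 0 T ×ˢ (univ : Set ℝ)), u q.1 q.2 ≠ 0 :=
    fun q _ => (hupos q.1 q.2).ne'
  have h2 : ∀ q ∈ (Ioo 0 T ×ˢ (univ : Set ℝ)), v q.1 q.2 ≠ 0 :=
    fun q _ => (hvpos q.1 q.2).ne'
  exact ((aux_cont_pt husmooth).mul (((hCu.log h1).sub (hCv.log h2)).add
    continuousOn_const)).sub ((hCu.div hCv h2).mul (aux_cont_pt hvsmooth))

end auxEntropy

/-- Preservation of the relative entropy: for positive solutions of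
`∂ₜu = ∂ₓ(u ∂ₓ(u+v))`, `∂ₜv = ∂ₓ(v ∂ₓ(u+v))` on `(0,T) × ℝ` which agree outside a
compact set, the relative entropy `H(u(t)‖v(t)) = ∫ u log(u/v) dx` is constant on `[0,T]`. -/
theorem stmt_11 (T : ℝ) (hT : 0 < T) (u v : ℝ → ℝ → ℝ)
    (husmooth : ContDiffOn ℝ 2 (Function.uncurry u) (Icc 0 T ×ˢ univ))
    (hvsmooth : ContDiffOn ℝ 2 (Function.uncurry v) (Icc 0 T ×ˢ univ))
    (hupos : ∀ t x : ℝ, 0 < u t x) (hvpos : ∀ t x : ℝ, 0 < v t x)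
    (hu : ∀ t ∈ Ioo (0:ℝ) T, ∀ x : ℝ,
      pt u t x = px (fun s y => u s y * px (fun a b => u a b + v a b) s y) t x)
    (hv : ∀ t ∈ Ioo (0:ℝ) T, ∀ x : ℝ,
      pt v t x = px (fun s y => v s y * px (fun a b => u a b + v a b) s y) t x)
    (R : ℝ) (hR : 0 < R)
    (hdecay : ∀ t ∈ Icc (0:ℝ) T, ∀ x : ℝ, R ≤ |x| → u t x = v t x)
    (hint : ∀ t ∈ Icc (0:ℝ) T,
      Integrable (fun x => u t x * Real.log (u t x / v t x))) :
    ∀ t ∈ Icc (0:ℝ) T,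
      ∫ x, u t x * Real.log (u t x / v t x)
        = ∫ x, u 0 x * Real.log (u 0 x / v 0 x) := by
  classical
  set F : ℝ → ℝ → ℝ := fun t x => u t x * (Real.log (u t x) - Real.log (v t x))
    with hFdef
  set Φ : ℝ → ℝ → ℝ := fun t x =>
    pt u t x * (Real.log (u t x) - Real.log (v t x) + 1)
      - (u t x / v t x) * pt v t x with hΦdef
  have hFeq : ∀ t : ℝ, (fun x => u t x * Real.log (u t x / v t x)) = F t := by
    intro t
    funext x
    rw [Real.log_div (hupos t x).ne' (hvpos t x).ne']
  set H : ℝ → ℝ := fun t => ∫ x, F t x with hHdef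
  have hHint : ∀ t ∈ Icc (0:ℝ) T, Integrable (F t) := by
    intro t ht
    rw [← hFeq t]
    exact hint t ht
  -- vanishing of F outside the compact set
  have hF0 : ∀ t ∈ Icc (0:ℝ) T, ∀ x : ℝ, R ≤ |x| → F t x = 0 := by
    intro t ht x hx
    simp only [hFdef, hdecay t ht x hx]
    ring
  -- continuity of F t in x, for each t ∈ Icc
  have hFcx : ∀ t ∈ Icc (0:ℝ) T, Continuous (F t) := by
    intro t ht
    have hU : Continuous (fun x => u t x) := (aux_slice_x husmooth ht).continuous
    have hV : Continuous (fun x => v t x) := (aux_slice_x hvsmooth ht).continuous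
    exact hU.mul ((hU.log (fun x => (hupos t x).ne')).sub
      (hV.log (fun x => (hvpos t x).ne')))
  have hΦcont := aux_cont_Phi husmooth hvsmooth hupos hvpos
  -- derivative of H is zero on the open interval
  have hHderiv : ∀ t₀ ∈ Ioo (0:ℝ) T, HasDerivAt H 0 t₀ := by
    intro t₀ ht₀
    set ε : ℝ := min t₀ (T - t₀) / 2 with hεdef
    have hεpos : 0 < ε := by
      have h1 : 0 < t₀ := ht₀.1
      have h2 : 0 < T - t₀ := by linarith [ht₀.2]
      have := lt_min h1 h2
      positivity
    have hball : ∀ s : ℝ, dist s t₀ ≤ ε → s ∈ Ioo (0:ℝ) T := by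
      intro s hs
      rw [Real.dist_eq, abs_le] at hs
      constructor
      · have : ε ≤ t₀ / 2 := by
          rw [hεdef]
          have := min_le_left t₀ (T - t₀)
          linarith
        linarith
      · have : ε ≤ (T - t₀) / 2 := by
          rw [hεdef]
          have := min_le_right t₀ (T - t₀)
          linarith
        linarith
    have hballo : ∀ s ∈ Metric.ball t₀ ε, s ∈ Ioo (0:ℝ) T :=
      fun s hs => hball s (le_of_lt hs)
    -- bound on the compact set
    set K : Set (ℝ × ℝ) := Metric.closedBall t₀ ε ×ˢ Icc (-R) R with hKdef
    have hKcpt : IsCompact K := (isCompact_closedBall t₀ ε).prod isCompact_Icc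
    have hKΩ : K ⊆ Ioo 0 T ×ˢ univ := by
      rintro ⟨s, x⟩ ⟨hs, _⟩
      exact ⟨hball s hs, trivial⟩
    obtain ⟨C, hC⟩ := hKcpt.exists_bound_of_continuousOn (hΦcont.mono hKΩ)
    set bound : ℝ → ℝ := (Icc (-R) R).indicator (fun _ => C) with hbdef
    have hbint : Integrable bound := by
      rw [hbdef, integrable_indicator_iff measurableSet_Icc]
      exact integrableOn_const measure_Icc_lt_top.ne
    have hmeas : ∀ᶠ s in nhds t₀, AEStronglyMeasurable (F s) volume := by
      filter_upwards [eventually_nhds_iff.mpr ⟨Ioo 0 T, fun s hs => hs,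
        isOpen_Ioo, ht₀⟩] with s hs
      exact (hFcx s (Ioo_subset_Icc_self hs)).aestronglyMeasurable
    have hΦmeas : AEStronglyMeasurable (Φ t₀) volume := by
      have : Continuous (fun x => Φ t₀ x) := by
        have := hΦcont.comp_continuous
          (continuous_const.prodMk continuous_id)
          (fun x => mk_mem_prod ht₀ (mem_univ x))
        exact this
      exact this.aestronglyMeasurable
    have hbound : ∀ᵐ x : ℝ, ∀ s ∈ Metric.ball t₀ ε, ‖Φ s x‖ ≤ bound x := by
      refine Filter.Eventually.of_forall (fun x => fun s hs => ?_)
      by_cases hx : x ∈ Icc (-R) R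
      · rw [hbdef, indicator_of_mem hx]
        exact hC (s, x) ⟨Metric.ball_subset_closedBall hs, hx⟩
      · have hxR : R ≤ |x| := by
          rcases not_and_or.mp hx with h | h <;> push_neg at h
          · rw [abs_of_neg (by linarith)]; linarith
          · exact le_trans (le_of_lt h) (le_abs_self x)
        rw [hbdef, indicator_of_notMem hx]
        have := aux_Phi_zero_far husmooth hvsmooth hupos hvpos hdecay
          (hballo s hs) hxR
        simp only [hΦdef, this, norm_zero, le_refl]
    have hdiff : ∀ᵐ x : ℝ, ∀ s ∈ Metric.ball t₀ ε, HasDerivAt (F · x) (Φ s x) s := by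
      refine Filter.Eventually.of_forall (fun x s hs => ?_)
      exact aux_hasDerivAt_F husmooth hvsmooth hupos hvpos (hballo s hs) x
    have hkey := (hasDerivAt_integral_of_dominated_loc_of_deriv_le (Metric.ball_mem_nhds t₀ hεpos) hmeas
      (hHint t₀ (Ioo_subset_Icc_self ht₀)) hΦmeas hbound hbint hdiff).2
    have hzero : ∫ x : ℝ, Φ t₀ x = 0 :=
      aux_integral_Phi_zero husmooth hvsmooth hupos hvpos hu hv hR hdecay ht₀
    rwa [hzero] at hkey
  -- continuity of H on the closed interval
  have hHcont : ContinuousOn H (Icc 0 T) := by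
    have hsub : (Icc 0 T ×ˢ (univ : Set ℝ)) ⊆ Icc 0 T ×ˢ univ := subset_rfl
    have hCu : ContinuousOn (fun q : ℝ × ℝ => u q.1 q.2) (Icc 0 T ×ˢ univ) :=
      husmooth.continuousOn
    have hCv : ContinuousOn (fun q : ℝ × ℝ => v q.1 q.2) (Icc 0 T ×ˢ univ) :=
      hvsmooth.continuousOn
    have hFj : ContinuousOn (fun q : ℝ × ℝ => F q.1 q.2) (Icc 0 T ×ˢ univ) :=
      hCu.mul ((hCu.log (fun q _ => (hupos q.1 q.2).ne')).sub
        (hCv.log (fun q _ => (hvpos q.1 q.2).ne')))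
    have hKcpt : IsCompact (Icc (0:ℝ) T ×ˢ Icc (-R) R) := isCompact_Icc.prod isCompact_Icc
    obtain ⟨C, hC⟩ := hKcpt.exists_bound_of_continuousOn
      (hFj.mono (prod_mono subset_rfl (subset_univ _)))
    set bound : ℝ → ℝ := (Icc (-R) R).indicator (fun _ => C) with hbdef
    have hbint : Integrable bound := by
      rw [hbdef, integrable_indicator_iff measurableSet_Icc]
      exact integrableOn_const measure_Icc_lt_top.ne
    apply continuousOn_of_dominated
      (fun t ht => (hFcx t ht).aestronglyMeasurable) _ hbint
    · refine Filter.Eventually.of_forall (fun x => ?_)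
      have hU : ContinuousOn (fun s => u s x) (Icc 0 T) :=
        (aux_slice_t husmooth x).continuousOn
      have hV : ContinuousOn (fun s => v s x) (Icc 0 T) :=
        (aux_slice_t hvsmooth x).continuousOn
      exact hU.mul ((hU.log (fun s _ => (hupos s x).ne')).sub
        (hV.log (fun s _ => (hvpos s x).ne')))
    · intro t ht
      refine Filter.Eventually.of_forall (fun x => ?_)
      by_cases hx : x ∈ Icc (-R) R
      · rw [hbdef, indicator_of_mem hx]
        exact hC (t, x) ⟨ht, hx⟩
      · have hxR : R ≤ |x| := by
          rcases not_and_or.mp hx with h | h <;> push_neg at h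
          · rw [abs_of_neg (by linarith)]; linarith
          · exact le_trans (le_of_lt h) (le_abs_self x)
        rw [hbdef, indicator_of_notMem hx, hF0 t ht x hxR, norm_zero]
  -- H is constant on the open interval
  have hmono : ∀ a b : ℝ, a ∈ Ioo (0:ℝ) T → b ∈ Ioo (0:ℝ) T → a ≤ b → H b = H a := by
    intro a b ha hb hab
    have hIcc : Icc a b ⊆ Ioo (0:ℝ) T := fun s hs => ⟨lt_of_lt_of_le ha.1 hs.1,
      lt_of_le_of_lt hs.2 hb.2⟩
    have := constant_of_has_deriv_right_zero (f := H) (a := a) (b := b)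
      (fun s hs => (hHderiv s (hIcc hs)).continuousAt.continuousWithinAt)
      (fun s hs => (hHderiv s (hIcc ⟨hs.1, hs.2.le⟩)).hasDerivWithinAt)
    exact this b (right_mem_Icc.mpr hab)
  have hmid : T / 2 ∈ Ioo (0:ℝ) T := ⟨by linarith, by linarith⟩
  have hIoo : ∀ t ∈ Ioo (0:ℝ) T, H t = H (T / 2) := by
    intro t ht
    rcases le_total t (T / 2) with h | h
    · exact (hmono t (T / 2) ht hmid h).symm
    · exact hmono (T / 2) t hmid ht h
  have hconst : ∀ t ∈ Icc (0:ℝ) T, H t = H (T / 2) := by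
    intro t ht
    have htc : t ∈ closure (Ioo (0:ℝ) T) := by
      rw [closure_Ioo hT.ne]
      exact ht
    have hne : (nhdsWithin t (Ioo (0:ℝ) T)).NeBot :=
      mem_closure_iff_nhdsWithin_neBot.mp htc
    have h1 : Filter.Tendsto H (nhdsWithin t (Ioo (0:ℝ) T)) (nhds (H t)) :=
      (hHcont t ht).mono Ioo_subset_Icc_self
    have h2 : Filter.Tendsto H (nhdsWithin t (Ioo (0:ℝ) T)) (nhds (H (T / 2))) := by
      refine Filter.Tendsto.congr' ?_ tendsto_const_nhds
      filter_upwards [self_mem_nhdsWithin] with s hs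
      exact (hIoo s hs).symm
    exact tendsto_nhds_unique h1 h2
  intro t ht
  have h0 : (0:ℝ) ∈ Icc (0:ℝ) T := ⟨le_refl 0, hT.le⟩
  calc ∫ x, u t x * Real.log (u t x / v t x) = H t := by rw [hHdef]; rw [hFeq t]
    _ = H (T / 2) := hconst t ht
    _ = H 0 := (hconst 0 h0).symm
    _ = ∫ x, u 0 x * Real.log (u 0 x / v 0 x) := by rw [hHdef]; rw [hFeq 0]
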